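/- Let A be an additive category with weak kernels. The Yoneda embedding X ↦ Hom_A(−, X) identifies the idempotent completion of A with the full subcategory of projective objects of the abelian category Fp(A^op, Ab) of finitely presented functors A^op → Ab. -/

import Mathlib

open CategoryTheory Limits Opposite

universe v u

section Stmt12

variable {A : Type u} [Category.{v} A]

/-- An additive functor `F : Aᵒᵖ ⥤ Ab` is finitely presented (coherent) if it admits
an exact presentation `Hom_A(−, X) → Hom_A(−, Y) → F → 0` by representable functors. -/
def IsFinitelyPresentedFunctor [Preadditive A] (F : Aᵒᵖ ⥤ AddCommGrpCat.{v}) : Prop :=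
  ∃ (X Y : A) (η : preadditiveYoneda.obj X ⟶ preadditiveYoneda.obj Y)
    (ε : preadditiveYoneda.obj Y ⟶ F),
      (∀ W : Aᵒᵖ, Function.Surjective (ε.app W)) ∧
      (∀ (W : Aᵒᵖ) (y : (preadditiveYoneda.obj Y).obj W),
        ε.app W y = 0 ↔ ∃ x, η.app W x = y)

/-- Representable functors are finitely presented. -/
lemma preadditiveYoneda_obj_isFinitelyPresented [Preadditive A] (X : A) :
    IsFinitelyPresentedFunctor (preadditiveYoneda.obj X) := by
  refine ⟨X, X, 0, 𝟙 _, fun W => fun y => ⟨y, rfl⟩, fun W y => ?_⟩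
  constructor
  · intro h
    exact ⟨0, by simpa using h.symm⟩
  · rintro ⟨x, rfl⟩
    simp

/-- The Yoneda embedding of `A` into the category of finitely presented functors. -/
def fpYoneda [Preadditive A] :
    A ⥤ ObjectProperty.FullSubcategory (fun F : Aᵒᵖ ⥤ AddCommGrpCat.{v} => IsFinitelyPresentedFunctor F) :=
  ObjectProperty.lift _ preadditiveYoneda preadditiveYoneda_obj_isFinitelyPresented


set_option linter.unusedSectionVars false

lemma AddCommGrp_comp_apply' {X Y Z : AddCommGrpCat.{v}} (f : X ⟶ Y) (g : Y ⟶ Z) (x : X) :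
    (f ≫ g) x = g (f x) := rfl

namespace Stmt12Aux

open Idempotents

variable {A : Type u} [Category.{v} A] [Preadditive A]

def fixSub (P : Karoubi A) (W : Aᵒᵖ) : AddSubgroup (unop W ⟶ P.X) where
  carrier := {f | f ≫ P.p = f}
  add_mem' := fun {a b} ha hb => by
    simp only [Set.mem_setOf_eq] at *; rw [Preadditive.add_comp, ha, hb]
  zero_mem' := by simp
  neg_mem' := fun {a} ha => by
    simp only [Set.mem_setOf_eq] at *; rw [Preadditive.neg_comp, ha]

@[simp] lemma mem_fixSub {P : Karoubi A} {W : Aᵒᵖ} (f : unop W ⟶ P.X) :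
    f ∈ fixSub P W ↔ f ≫ P.p = f := Iff.rfl

def M (P : Karoubi A) : Aᵒᵖ ⥤ AddCommGrpCat.{v} where
  obj W := AddCommGrpCat.of (fixSub P W)
  map {W W'} h := AddCommGrpCat.ofHom
    { toFun := fun f => ⟨h.unop ≫ f.1, by rw [mem_fixSub, Category.assoc, f.2]⟩
      map_zero' := Subtype.ext (by simp)
      map_add' := fun a b => Subtype.ext (by simp [Preadditive.comp_add]) }
  map_id W := by
    ext f
    exact Category.id_comp f.1
  map_comp {W W' W''} h h' := by
    ext f
    exact Category.assoc h'.unop h.unop f.1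

@[simp] lemma M_map_apply {P : Karoubi A} {W W' : Aᵒᵖ} (h : W ⟶ W') (f : (M P).obj W) :
    ((M P).map h f).1 = h.unop ≫ f.1 := rfl

def Mfunctor : Karoubi A ⥤ (Aᵒᵖ ⥤ AddCommGrpCat.{v}) where
  obj := M
  map {P Q} φ :=
    { app := fun W => AddCommGrpCat.ofHom
        { toFun := fun f => ⟨f.1 ≫ φ.f, by
            rw [mem_fixSub, Category.assoc, Karoubi.comp_p]⟩
          map_zero' := Subtype.ext (by simp)
          map_add' := fun a b => Subtype.ext (by simp [Preadditive.add_comp]) }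
      naturality := fun W W' h => by
        ext f
        apply Subtype.ext
        show (h.unop ≫ f.1) ≫ φ.f = h.unop ≫ (f.1 ≫ φ.f)
        simp }
  map_id P := by
    ext W f
    exact Subtype.ext f.2
  map_comp {P Q R} φ ψ := by
    ext W f
    apply Subtype.ext
    show f.1 ≫ φ.f ≫ ψ.f = (f.1 ≫ φ.f) ≫ ψ.f
    simp

@[simp] lemma Mfunctor_map_apply {P Q : Karoubi A} (φ : P ⟶ Q) {W : Aᵒᵖ}
    (f : (M P).obj W) :
    (((Mfunctor.map φ).app W) f).1 = f.1 ≫ φ.f := rfl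


lemma M_fp (P : Karoubi A) : IsFinitelyPresentedFunctor (M P) := by
  refine ⟨P.X, P.X, preadditiveYoneda.map (𝟙 P.X - P.p),
    { app := fun W => AddCommGrpCat.ofHom
        { toFun := fun (g : unop W ⟶ P.X) => (⟨g ≫ P.p, by rw [mem_fixSub, Category.assoc, P.idem]⟩ : (M P).obj W)
          map_zero' := Subtype.ext Limits.zero_comp
          map_add' := fun a b => Subtype.ext (Preadditive.add_comp _ _ _ _ _ _) }
      naturality := fun W W' h => by
        ext g
        apply Subtype.ext
        show (h.unop ≫ g) ≫ P.p = h.unop ≫ (g ≫ P.p)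
        exact Category.assoc _ _ _ }, fun W y => ⟨y.1, Subtype.ext y.2⟩, fun W (y : unop W ⟶ P.X) => ?_⟩
  constructor
  · intro h
    have h' : y ≫ P.p = 0 := congrArg Subtype.val h
    refine ⟨y, ?_⟩
    show y ≫ (𝟙 P.X - P.p) = y
    rw [Preadditive.comp_sub, h', Category.comp_id, sub_zero]
  · rintro ⟨(x : unop W ⟶ P.X), rfl⟩
    apply Subtype.ext
    show (x ≫ (𝟙 P.X - P.p)) ≫ P.p = 0
    simp [Preadditive.sub_comp, Preadditive.comp_sub]

lemma yoneda_nat' {X : A} {F : Aᵒᵖ ⥤ AddCommGrpCat.{v}} (ε : preadditiveYoneda.obj X ⟶ F)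
    (W : Aᵒᵖ) (x : unop W ⟶ X) :
    ε.app W x = F.map x.op (ε.app (op X) (𝟙 X)) := by
  have h := ε.naturality x.op
  have h2 := ConcreteCategory.congr_hom h (𝟙 X)
  change ε.app W ((preadditiveYoneda.obj X).map x.op (𝟙 X)) = F.map x.op (ε.app (op X) (𝟙 X)) at h2
  have h3 : ((preadditiveYoneda.obj X).map x.op) (𝟙 X) = x := Category.comp_id x
  rw [h3] at h2
  exact h2

lemma yoneda_nat {X Y : A} (η : preadditiveYoneda.obj X ⟶ preadditiveYoneda.obj Y)
    (W : Aᵒᵖ) (x : unop W ⟶ X) :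
    η.app W x = x ≫ η.app (op X) (𝟙 X) := by
  have := yoneda_nat' η W x
  rw [this]; rfl

lemma nat_app {F G : Aᵒᵖ ⥤ AddCommGrpCat.{v}} (ε : F ⟶ G) {W W' : Aᵒᵖ} (h : W ⟶ W')
    (x : F.obj W) : ε.app W' (F.map h x) = G.map h (ε.app W x) := by
  have h2 := ConcreteCategory.congr_hom (ε.naturality h) x
  rw [AddCommGrpCat.comp_apply, AddCommGrpCat.comp_apply] at h2
  exact h2

lemma fp_map_add {F : Aᵒᵖ ⥤ AddCommGrpCat.{v}} (hF : IsFinitelyPresentedFunctor F) {W W' : Aᵒᵖ}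
    (f g : W ⟶ W') (x : F.obj W) : F.map (f + g) x = F.map f x + F.map g x := by
  obtain ⟨X, Y, η, ε, hsurj, -⟩ := hF
  obtain ⟨(y : unop W ⟶ Y), rfl⟩ := hsurj W x
  have e1 : ∀ (h : W ⟶ W'), F.map h (ε.app W y) = ε.app W' (h.unop ≫ y) := by
    intro h
    rw [← nat_app ε h y]
    congr 1
  rw [e1, e1, e1]; refine Eq.trans ?_ (map_add _ _ _)
  congr 1
  show (f + g).unop ≫ y = f.unop ≫ y + g.unop ≫ y
  rw [unop_add, Preadditive.add_comp]

lemma fp_map_zero {F : Aᵒᵖ ⥤ AddCommGrpCat.{v}} (hF : IsFinitelyPresentedFunctor F) {W W' : Aᵒᵖ}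
    (x : F.obj W) : F.map (0 : W ⟶ W') x = 0 := by
  have h := fp_map_add hF (0 : W ⟶ W') 0 x
  rw [add_zero] at h
  exact (right_eq_add.mp h)

@[simp] lemma pyoneda_map_app {Y : A} {W W' : Aᵒᵖ} (h : W ⟶ W')
    (y : (preadditiveYoneda.obj Y).obj W) :
    (preadditiveYoneda.obj Y).map h y = h.unop ≫ y := rfl

section Coker

variable {F G : Aᵒᵖ ⥤ AddCommGrpCat.{v}} (π : F ⟶ G)

def cokerF : Aᵒᵖ ⥤ AddCommGrpCat.{v} where
  obj W := AddCommGrpCat.of (G.obj W ⧸ (π.app W).hom.range)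
  map {W W'} h := AddCommGrpCat.ofHom <| QuotientAddGroup.map _ _ (G.map h).hom
    (by
      rintro x ⟨u, rfl⟩
      exact ⟨F.map h u, nat_app π h u⟩)
  map_id W := by
    refine AddCommGrpCat.ext fun x => ?_
    refine QuotientAddGroup.induction_on x ?_
    intro g
    show QuotientAddGroup.mk (G.map (𝟙 W) g) = QuotientAddGroup.mk g
    rw [G.map_id]
    rfl
  map_comp {W W' W''} h h' := by
    refine AddCommGrpCat.ext fun x => ?_
    refine QuotientAddGroup.induction_on x ?_
    intro g
    show QuotientAddGroup.mk (G.map (h ≫ h') g) = QuotientAddGroup.mk (G.map h' (G.map h g))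
    rw [G.map_comp]
    rfl

def cokerQ : G ⟶ cokerF π where
  app W := AddCommGrpCat.ofHom (QuotientAddGroup.mk' _)
  naturality W W' h := by
    ext g
    rfl

lemma cokerQ_zero : π ≫ cokerQ π = 0 := by
  ext W x
  show (QuotientAddGroup.mk' _) (π.app W x) = 0
  rw [QuotientAddGroup.mk'_apply, QuotientAddGroup.eq_zero_iff]
  exact ⟨x, rfl⟩

end Coker

lemma coker_fp [HasFiniteBiproducts A] {F G : Aᵒᵖ ⥤ AddCommGrpCat.{v}} (π : F ⟶ G)
    (hF : IsFinitelyPresentedFunctor F) (hG : IsFinitelyPresentedFunctor G) : IsFinitelyPresentedFunctor (cokerF π) := by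
  obtain ⟨XF, YF, ηF, εF, hFsurj, -⟩ := hF
  obtain ⟨XG, YG, ηG, εG, hGsurj, hGex⟩ := hG
  haveI : HasBinaryBiproducts A := hasBinaryBiproducts_of_finite_biproducts A
  obtain ⟨g1, hg1⟩ : ∃ g1 : XG ⟶ YG, ∀ (W : Aᵒᵖ) (x : unop W ⟶ XG),
      ηG.app W x = x ≫ g1 := ⟨_, fun W x => yoneda_nat ηG W x⟩
  obtain ⟨(y0 : YF ⟶ YG), hy0⟩ := hGsurj (op YF) (π.app (op YF) (εF.app (op YF) (𝟙 YF)))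
  have key : ∀ (W : Aᵒᵖ) (t : unop W ⟶ YF),
      π.app W (εF.app W t) = εG.app W (t ≫ y0) := by
    intro W t
    rw [yoneda_nat' εF W t, nat_app π t.op, ← hy0, ← nat_app εG t.op y0]
    rfl
  have hd : biprod.desc g1 y0 = biprod.fst ≫ g1 + biprod.snd ≫ y0 := by
    apply biprod.hom_ext' <;> simp
  have hzero : ∀ (W : Aᵒᵖ) (x : unop W ⟶ XG), εG.app W (x ≫ g1) = 0 := by
    intro W x
    rw [← hg1 W x]
    exact (hGex W _).mpr ⟨_, rfl⟩
  refine ⟨XG ⊞ YF, YG, preadditiveYoneda.map (biprod.desc g1 y0), εG ≫ cokerQ π, ?_, ?_⟩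
  · -- surjectivity
    intro W x
    refine QuotientAddGroup.induction_on x ?_
    intro g
    obtain ⟨y, hy⟩ := hGsurj W g
    exact ⟨y, by rw [NatTrans.comp_app, AddCommGrpCat.comp_apply, hy]; rfl⟩
  · -- exactness
    intro W y
    rw [NatTrans.comp_app, AddCommGrpCat.comp_apply]
    show (QuotientAddGroup.mk' _) (εG.app W y) = 0 ↔ _
    rw [QuotientAddGroup.mk'_apply, QuotientAddGroup.eq_zero_iff]
    have happ : ∀ (z : unop W ⟶ XG ⊞ YF),
        (preadditiveYoneda.map (biprod.desc g1 y0)).app W z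
          = (z ≫ biprod.fst) ≫ g1 + (z ≫ biprod.snd) ≫ y0 := by
      intro z
      show z ≫ biprod.desc g1 y0 = _
      rw [hd, Preadditive.comp_add, Category.assoc, Category.assoc]
    constructor
    · rintro ⟨u, hu⟩
      obtain ⟨(t : unop W ⟶ YF), rfl⟩ := hFsurj W u
      rw [key W t] at hu
      have h0 : εG.app W (y - (show ((preadditiveYoneda.obj YG).obj W) from t ≫ y0)) = 0 := by
        rw [map_sub, hu, sub_self]
      obtain ⟨(x1 : unop W ⟶ XG), hx1⟩ := (hGex W _).mp h0
      rw [hg1 W x1] at hx1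
      refine ⟨biprod.lift x1 t, ?_⟩
      rw [happ]
      simp only [biprod.lift_fst, biprod.lift_snd]
      rw [hx1]
      exact sub_add_cancel y (t ≫ y0)
    · rintro ⟨(z : unop W ⟶ XG ⊞ YF), rfl⟩
      rw [happ]; erw [map_add]; rw [hzero, zero_add, ← key W (z ≫ biprod.snd)]
      exact ⟨_, rfl⟩

lemma surj_of_cancel [HasFiniteBiproducts A] {F G : Aᵒᵖ ⥤ AddCommGrpCat.{v}}
    (hF : IsFinitelyPresentedFunctor F) (hG : IsFinitelyPresentedFunctor G) (π : F ⟶ G)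
    (h : ∀ (H : Aᵒᵖ ⥤ AddCommGrpCat.{v}), IsFinitelyPresentedFunctor H → ∀ (a b : G ⟶ H), π ≫ a = π ≫ b → a = b)
    (W : Aᵒᵖ) : Function.Surjective (π.app W) := by
  have hq : cokerQ π = 0 := h _ (coker_fp π hF hG) _ 0
    (by rw [cokerQ_zero π, Limits.comp_zero])
  intro x
  have hx : ((cokerQ π).app W) x = 0 := by rw [hq]; simp
  obtain ⟨u, hu⟩ := (QuotientAddGroup.eq_zero_iff x).mp hx
  exact ⟨u, hu⟩

abbrev Cfp (A : Type u) [Category.{v} A] [Preadditive A] :=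
  ObjectProperty.FullSubcategory (fun F : Aᵒᵖ ⥤ AddCommGrpCat.{v} => IsFinitelyPresentedFunctor F)

lemma epi_of_surj {X Y : Cfp A} (f : X ⟶ Y)
    (h : ∀ W, Function.Surjective (f.hom.app W)) : Epi f := by
  refine ⟨fun {Z} a b hab => ?_⟩
  have hab' : f.hom ≫ a.hom = f.hom ≫ b.hom := congrArg InducedCategory.Hom.hom hab
  apply ObjectProperty.hom_ext
  apply NatTrans.ext
  funext W
  refine AddCommGrpCat.ext fun y => ?_
  obtain ⟨x, rfl⟩ := h W y
  have h2 := ConcreteCategory.congr_hom (congrArg (fun (t : X.obj ⟶ Z.obj) => t.app W) hab') x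
  simpa using h2

lemma surj_of_epi' {X Y : Cfp A} [HasFiniteBiproducts A] (f : X ⟶ Y) [Epi f] (W : Aᵒᵖ) :
    Function.Surjective (f.hom.app W) := by
  refine surj_of_cancel X.2 Y.2 f.hom (fun H hH a b hab => ?_) W
  let a' : Y ⟶ (⟨H, hH⟩ : Cfp A) := ObjectProperty.homMk a
  let b' : Y ⟶ (⟨H, hH⟩ : Cfp A) := ObjectProperty.homMk b
  have hab2 : f ≫ a' = f ≫ b' := InducedCategory.hom_ext hab
  rw [cancel_epi f] at hab2
  exact congrArg InducedCategory.Hom.hom hab2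

lemma M_projective [HasFiniteBiproducts A] (P : Karoubi A) :
    Projective (⟨M P, M_fp P⟩ : Cfp A) := by
  refine ⟨fun {E X} f e he => ?_⟩
  have surj : ∀ W, Function.Surjective (e.hom.app W) := fun W =>
    surj_of_epi' e W
  obtain ⟨v, hv⟩ := surj (op P.X) (f.hom.app (op P.X) ⟨P.p, P.idem⟩)
  have hEadd := E.2
  refine ⟨ObjectProperty.homMk
            { app := fun W => AddCommGrpCat.ofHom (AddMonoidHom.mk' (fun g => E.obj.map g.1.op v) ?_),
              naturality := ?_ }, ?_⟩
  · intro a b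
    have h1 : (a + b).1.op = a.1.op + b.1.op := by
      rw [← op_add]
      rfl
    show E.obj.map ((a + b).1.op) v = E.obj.map a.1.op v + E.obj.map b.1.op v
    rw [h1, fp_map_add hEadd]
  · intro W W' h
    refine AddCommGrpCat.ext fun g => ?_
    show E.obj.map ((M P).map h g).1.op v = E.obj.map h (E.obj.map g.1.op v)
    rw [← AddCommGrp_comp_apply', ← E.obj.map_comp]
    rfl
  · apply ObjectProperty.hom_ext
    apply NatTrans.ext
    funext W
    refine AddCommGrpCat.ext fun g => ?_
    show e.hom.app W (E.obj.map g.1.op v)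
      = f.hom.app W g
    rw [nat_app e.hom g.1.op v, hv,
      ← nat_app f.hom g.1.op ⟨P.p, P.idem⟩]
    congr 1
    apply Subtype.ext
    show g.1.op.unop ≫ P.p = g.1
    exact g.2

def MK [HasFiniteBiproducts A] : Karoubi A ⥤
    ObjectProperty.FullSubcategory (fun P : Cfp A => Projective P) :=
  ObjectProperty.lift _ (ObjectProperty.lift _ Mfunctor M_fp)
    (fun P => M_projective P)

lemma MK_faithful [HasFiniteBiproducts A] : (MK (A := A)).Faithful := by
  refine ⟨fun {P Q} {φ ψ} h => ?_⟩
  have h2 : (Mfunctor.map φ) = (Mfunctor.map ψ) := congrArg (fun t => t.hom.hom) h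
  have h3 := ConcreteCategory.congr_hom
    (congrArg (fun (t : M P ⟶ M Q) => t.app (op P.X)) h2) ⟨P.p, P.idem⟩
  have h4 : P.p ≫ φ.f = P.p ≫ ψ.f := congrArg Subtype.val h3
  apply Karoubi.Hom.ext
  rw [← Karoubi.p_comp φ, ← Karoubi.p_comp ψ]
  exact h4

lemma MK_full [HasFiniteBiproducts A] : (MK (A := A)).Full := by
  refine ⟨fun {P Q} ξ => ?_⟩
  let ξ' : M P ⟶ M Q := ξ.hom.hom
  have hnat : ∀ (W : Aᵒᵖ) (g : (M P).obj W),
      ξ'.app W g = (M Q).map g.1.op (ξ'.app (op P.X) ⟨P.p, P.idem⟩) := by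
    intro W g
    rw [← nat_app ξ' g.1.op ⟨P.p, P.idem⟩]
    congr 1
    exact Subtype.ext g.2.symm
  set φf : P.X ⟶ Q.X := (ξ'.app (op P.X) ⟨P.p, P.idem⟩).1 with hφf
  have hfix : φf ≫ Q.p = φf := (ξ'.app (op P.X) ⟨P.p, P.idem⟩).2
  have hleft : P.p ≫ φf = φf := by
    have := congrArg Subtype.val (hnat (op P.X) ⟨P.p, P.idem⟩)
    simpa using this.symm
  refine ⟨⟨φf, by rw [hfix, hleft]⟩, ?_⟩
  apply ObjectProperty.hom_ext
  apply ObjectProperty.hom_ext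
  show Mfunctor.map _ = ξ.hom.hom
  apply NatTrans.ext
  funext W
  refine AddCommGrpCat.ext fun g => ?_
  have := hnat W g
  apply Subtype.ext
  have hv : (ξ'.app W g).1 = g.1 ≫ φf := by
    rw [this]
    rfl
  exact hv.symm

lemma MK_essSurj [HasFiniteBiproducts A] : (MK (A := A)).EssSurj := by
  refine ⟨fun T => ?_⟩
  obtain ⟨X0, Y0, η0, ε0, hsurj, -⟩ := T.obj.2
  let Ycfp : Cfp A := ⟨preadditiveYoneda.obj Y0, preadditiveYoneda_obj_isFinitelyPresented Y0⟩
  let ε : Ycfp ⟶ T.obj := ObjectProperty.homMk ε0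
  haveI : Epi ε := epi_of_surj ε hsurj
  obtain ⟨s, hs⟩ := T.2.factors (𝟙 T.obj) ε
  let et : preadditiveYoneda.obj Y0 ⟶ preadditiveYoneda.obj Y0 := (ε ≫ s).hom
  have hYnat : ∀ (W : Aᵒᵖ) (x : (preadditiveYoneda.obj Y0).obj W),
      et.app W x = x ≫ et.app (op Y0) (𝟙 Y0) := fun W x => yoneda_nat et W x
  have hcomp : (ε ≫ s) ≫ (ε ≫ s) = ε ≫ s := by
    rw [Category.assoc, ← Category.assoc s ε s, hs, Category.id_comp]
  have h2 : ∀ (W : Aᵒᵖ) (x : (preadditiveYoneda.obj Y0).obj W),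
      et.app W (et.app W x) = et.app W x := by
    intro W x
    have h3 := ConcreteCategory.congr_hom (congrArg
      (fun (t : Ycfp ⟶ Ycfp) => t.hom.app W) hcomp) x
    exact h3
  set eY : Y0 ⟶ Y0 := et.app (op Y0) (𝟙 Y0) with heY
  have hidem : eY ≫ eY = eY := by
    have := h2 (op Y0) (𝟙 Y0)
    rw [hYnat (op Y0) eY] at this
    exact this
  have hse : ∀ (W : Aᵒᵖ) (x : T.obj.obj.obj W), et.app W (s.hom.app W x) = s.hom.app W x := by
    intro W x
    have hc2 : s ≫ (ε ≫ s) = s := by rw [← Category.assoc, hs, Category.id_comp]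
    have h3 := ConcreteCategory.congr_hom (congrArg
      (fun (t : T.obj ⟶ Ycfp) => t.hom.app W) hc2) x
    exact h3
  have hεs : ∀ (W : Aᵒᵖ) (x : T.obj.obj.obj W), ε0.app W (s.hom.app W x) = x := by
    intro W x
    have h3 := ConcreteCategory.congr_hom (congrArg
      (fun (t : T.obj ⟶ T.obj) => t.hom.app W) hs) x
    exact h3
  let Pk : Karoubi A := ⟨Y0, eY, hidem⟩
  let hom0 : M Pk ⟶ T.obj.obj :=
    { app := fun W => AddCommGrpCat.ofHom (AddMonoidHom.mk' (fun g => ε0.app W g.1)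
        (fun a b => map_add (ε0.app W).hom a.1 b.1))
      naturality := fun W W' h => by
        refine AddCommGrpCat.ext fun g => ?_
        show ε0.app W' ((M Pk).map h g).1 = T.obj.obj.map h (ε0.app W g.1)
        rw [← nat_app ε0 h g.1]
        rfl }
  let inv0 : T.obj.obj ⟶ M Pk :=
    { app := fun W => AddCommGrpCat.ofHom (AddMonoidHom.mk' (fun x => ⟨s.hom.app W x, by
        have := hse W x
        rw [hYnat W (s.hom.app W x)] at this
        exact this⟩)
        (fun a b => Subtype.ext (map_add (s.hom.app W).hom a b)))
      naturality := fun W W' h => by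
        refine AddCommGrpCat.ext fun x => ?_
        apply Subtype.ext
        show s.hom.app W' (T.obj.obj.map h x) = ((M Pk).map h ⟨s.hom.app W x, _⟩).1
        rw [nat_app s.hom h x]
        rfl }
  refine ⟨Pk, ⟨Iso.mk (ObjectProperty.homMk (ObjectProperty.homMk hom0)) (ObjectProperty.homMk (ObjectProperty.homMk inv0)) ?_ ?_⟩⟩
  · apply ObjectProperty.hom_ext
    apply ObjectProperty.hom_ext
    apply NatTrans.ext
    funext W
    refine AddCommGrpCat.ext fun g => ?_
    apply Subtype.ext
    show (inv0.app W (hom0.app W g)).1 = g.1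
    have h4 : s.hom.app W (ε0.app W g.1) = et.app W g.1 := rfl
    show s.hom.app W (ε0.app W g.1) = g.1
    rw [h4, hYnat W g.1]
    exact g.2
  · apply ObjectProperty.hom_ext
    apply ObjectProperty.hom_ext
    apply NatTrans.ext
    funext W
    refine AddCommGrpCat.ext fun x => ?_
    show ε0.app W (s.hom.app W x) = x
    exact hεs W x

end Stmt12Aux

/-- If `A` is an additive category with weak kernels, the Yoneda embedding
`X ↦ Hom_A(−, X)` identifies the idempotent completion (Karoubi envelope) of `A` with
the full subcategory of projective objects of the abelian category `Fp(Aᵒᵖ, Ab)`. -/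
theorem karoubi_equiv_projectives_of_fp
    [Preadditive A] [HasFiniteBiproducts A]
    (hwk : ∀ ⦃Y Z : A⦄ (β : Y ⟶ Z), ∃ (X : A) (α : X ⟶ Y),
      α ≫ β = 0 ∧ ∀ (W : A) (γ : W ⟶ Y), γ ≫ β = 0 → ∃ δ : W ⟶ X, δ ≫ α = γ) :
    ∃ E : Idempotents.Karoubi A ≌
        ObjectProperty.FullSubcategory (fun P : ObjectProperty.FullSubcategory
          (fun F : Aᵒᵖ ⥤ AddCommGrpCat.{v} => IsFinitelyPresentedFunctor F) =>
            Projective P),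
      Nonempty ((Idempotents.toKaroubi A ⋙ E.functor ⋙ ObjectProperty.ι _) ≅
        fpYoneda) := by
  haveI := Stmt12Aux.MK_faithful (A := A)
  haveI := Stmt12Aux.MK_full (A := A)
  haveI := Stmt12Aux.MK_essSurj (A := A)
  haveI : (Stmt12Aux.MK (A := A)).IsEquivalence := {}
  refine ⟨(Stmt12Aux.MK (A := A)).asEquivalence, ⟨?_⟩⟩
  refine NatIso.ofComponents (fun X => ?_) (fun {X X'} f => ?_)
  · -- component iso in Cfp between M (toKaroubi X) and pyoneda X
    refine Iso.mk ?_ ?_ ?_ ?_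
    · exact ObjectProperty.homMk
        { app := fun W => AddCommGrpCat.ofHom (AddMonoidHom.mk' (fun g => g.1) (fun a b => rfl))
          naturality := fun W W' h => AddCommGrpCat.ext fun g => rfl }
    · exact ObjectProperty.homMk
        { app := fun W => AddCommGrpCat.ofHom (AddMonoidHom.mk'
            (fun x => ⟨x, Category.comp_id x⟩) (fun a b => Subtype.ext rfl))
          naturality := fun W W' h => AddCommGrpCat.ext fun x => Subtype.ext rfl }
    · apply ObjectProperty.hom_ext
      apply NatTrans.ext
      funext W
      exact AddCommGrpCat.ext fun g => Subtype.ext rfl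
    · apply ObjectProperty.hom_ext
      apply NatTrans.ext
      funext W
      exact AddCommGrpCat.ext fun x => rfl
  · apply ObjectProperty.hom_ext
    apply NatTrans.ext
    funext W
    exact AddCommGrpCat.ext fun g => rfl

end Stmt12
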